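/- arXiv:2511.20289 — 8 statements merged into one kernel-verified Lean document; each statement's English description precedes it below -/
import Mathlib

section
/- Let N_T > N_N > 0 be reals, and let a, b > 0. Define F(λ) = N_T·a/(N_T+λ) − N_N·b/(N_N+λ) for λ ≥ 0. If λ₀ > 0 satisfies F(λ₀) = 0, then the derivative F′(λ₀) is strictly positive. -/
theorem stmt_0 (NT NN a b : ℝ) (hNN : 0 < NN) (hNT : NN < NT)
    (ha : 0 < a) (hb : 0 < b) (lam0 : ℝ) (hlam0 : 0 < lam0)
    (hF : NT * a / (NT + lam0) - NN * b / (NN + lam0) = 0) :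
    0 < deriv (fun lam : ℝ => NT * a / (NT + lam) - NN * b / (NN + lam)) lam0 := by
  have hT : (0:ℝ) < NT + lam0 := by linarith
  have hN : (0:ℝ) < NN + lam0 := by linarith
  have h1 : HasDerivAt (fun lam : ℝ => NT * a / (NT + lam))
      ((0 * (NT + lam0) - NT * a * 1) / (NT + lam0) ^ 2) lam0 :=
    (hasDerivAt_const lam0 (NT * a)).div ((hasDerivAt_id lam0).const_add NT) hT.ne'
  have h2 : HasDerivAt (fun lam : ℝ => NN * b / (NN + lam))
      ((0 * (NN + lam0) - NN * b * 1) / (NN + lam0) ^ 2) lam0 :=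
    (hasDerivAt_const lam0 (NN * b)).div ((hasDerivAt_id lam0).const_add NN) hN.ne'
  have hD : deriv (fun lam : ℝ => NT * a / (NT + lam) - NN * b / (NN + lam)) lam0 =
      (0 * (NT + lam0) - NT * a * 1) / (NT + lam0) ^ 2 - (0 * (NN + lam0) - NN * b * 1) / (NN + lam0) ^ 2 :=
    (h1.sub h2).deriv
  rw [hD]
  have hc : NT * a / (NT + lam0) = NN * b / (NN + lam0) := by linarith
  have hc' : NT * a * (NN + lam0) = NN * b * (NT + lam0) := by
    field_simp at hc; linarith
  rw [div_sub_div _ _ (by positivity) (by positivity : ((NN + lam0)^2:ℝ) ≠ 0)]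
  apply div_pos _ (by positivity)
  nlinarith [mul_pos hNN hb, mul_pos hT hN, mul_pos (mul_pos hNN hb) (sub_pos.mpr hNT)]
end

section
/- Let N_T > N_N > 0 and a, b > 0 be reals, and define F(λ) = N_T·a/(N_T+λ) − N_N·b/(N_N+λ) for λ ≥ 0. If F(λ₁) > 0 for some λ₁ ≥ 0, then F(λ₂) > 0 for every λ₂ > λ₁. Consequently the set {λ ≥ 0 : F(λ) > 0} is upward closed (an interval of the form [λ*, ∞) or (λ*, ∞) or empty or all of [0,∞)). -/
theorem stmt_1 (NT NN a b : ℝ) (hNN : 0 < NN) (hNT : NN < NT)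
    (ha : 0 < a) (hb : 0 < b)
    (F : ℝ → ℝ) (hFdef : ∀ lam, F lam = NT * a / (NT + lam) - NN * b / (NN + lam)) :
    (∀ lam1 lam2 : ℝ, 0 ≤ lam1 → lam1 < lam2 → 0 < F lam1 → 0 < F lam2) ∧
    ∀ lam1 ∈ {lam : ℝ | 0 ≤ lam ∧ 0 < F lam}, ∀ lam2, lam1 ≤ lam2 →
      lam2 ∈ {lam : ℝ | 0 ≤ lam ∧ 0 < F lam} := by
  have key : ∀ lam1 lam2 : ℝ, 0 ≤ lam1 → lam1 < lam2 → 0 < F lam1 → 0 < F lam2 := by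
    intro l1 l2 h1 h12 hF
    rw [hFdef] at hF ⊢
    have d1 : 0 < NT + l1 := by linarith
    have d2 : 0 < NN + l1 := by linarith
    have d3 : 0 < NT + l2 := by linarith
    have d4 : 0 < NN + l2 := by linarith
    rw [sub_pos, div_lt_div_iff₀ d2 d1] at hF
    rw [sub_pos, div_lt_div_iff₀ d4 d3]
    have hs : 0 < NT * a - NN * b := by
      by_contra h
      push_neg at h
      have hab : b < a := by
        nlinarith [mul_nonneg h1 (by linarith : (0:ℝ) ≤ NN * b - NT * a),
          mul_pos (hNN.trans hNT) hNN]
      nlinarith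
    nlinarith [mul_pos hs (sub_pos.mpr h12)]
  refine ⟨key, ?_⟩
  rintro l1 ⟨h1, hF⟩ l2 h12
  rcases eq_or_lt_of_le h12 with rfl | hlt
  · exact ⟨h1, hF⟩
  · exact ⟨le_trans h1 h12, key l1 l2 h1 hlt hF⟩
end

section
/- Let N_T > N_N > 0, θ_T, θ_N > 0, and Ē ≥ 0 with N_T(θ_T − Ē) > N_N(θ_N + Ē) and θ_N − θ_T + 2Ē > 0. Define λ_L = N_T·N_N·(θ_N − θ_T + 2Ē) / (N_T(θ_T − Ē) − N_N(θ_N + Ē)). Then λ_L > 0, and for every λ > λ_L and every ε_T, ε_N ∈ [−Ē, Ē], one has N_T(θ_T + ε_T)/(N_T + λ) > N_N(θ_N + ε_N)/(N_N + λ). -/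
theorem stmt_2 (NT NN tT tN E : ℝ) (hNN : 0 < NN) (hNT : NN < NT)
    (htT : 0 < tT) (htN : 0 < tN) (hE : 0 ≤ E)
    (hden : NN * (tN + E) < NT * (tT - E))
    (hnum : 0 < tN - tT + 2 * E) :
    0 < NT * NN * (tN - tT + 2 * E) / (NT * (tT - E) - NN * (tN + E)) ∧
    ∀ lam > NT * NN * (tN - tT + 2 * E) / (NT * (tT - E) - NN * (tN + E)),
      ∀ eT ∈ Set.Icc (-E) E, ∀ eN ∈ Set.Icc (-E) E,
        NN * (tN + eN) / (NN + lam) < NT * (tT + eT) / (NT + lam) := by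
  have hD : 0 < NT * (tT - E) - NN * (tN + E) := by linarith
  have hL : 0 < NT * NN * (tN - tT + 2 * E) / (NT * (tT - E) - NN * (tN + E)) := by
    exact div_pos (mul_pos (mul_pos (hNN.trans hNT) hNN) hnum) hD
  refine ⟨hL, fun lam hlam eT heT eN heN => ?_⟩
  obtain ⟨heT1, heT2⟩ := heT
  obtain ⟨heN1, heN2⟩ := heN
  have hlam0 : 0 < lam := lt_trans hL hlam
  have h1 : 0 < NN + lam := by linarith
  have h2 : 0 < NT + lam := by linarith
  rw [div_lt_div_iff₀ h1 h2]
  have key : NT * NN * (tN - tT + 2 * E) < lam * (NT * (tT - E) - NN * (tN + E)) := by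
    have := (div_lt_iff₀ hD).mp hlam
    linarith
  nlinarith [mul_pos h1 h2, mul_le_mul_of_nonneg_left heN2 h2.le,
    mul_le_mul_of_nonneg_left heT1 h1.le]
end

section
/- Let N_T > N_N > 0, θ_T, θ_N > 0, and Ē ≥ 0 with 1 < (θ_N − Ē)/(θ_T + Ē) < N_T/N_N. Define λ_U = N_T·N_N·((θ_N − Ē) − (θ_T + Ē)) / (N_T(θ_T + Ē) − N_N(θ_N − Ē)). Then λ_U > 0, and for every λ ∈ [0, λ_U] and every ε_T, ε_N ∈ [−Ē, Ē], one has N_T(θ_T + ε_T)/(N_T + λ) ≤ N_N(θ_N + ε_N)/(N_N + λ). -/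
theorem stmt_3 (NT NN tT tN E : ℝ) (hNN : 0 < NN) (hNT : NN < NT)
    (htT : 0 < tT) (htN : 0 < tN) (hE : 0 ≤ E)
    (h1 : 1 < (tN - E) / (tT + E)) (h2 : (tN - E) / (tT + E) < NT / NN) :
    0 < NT * NN * ((tN - E) - (tT + E)) / (NT * (tT + E) - NN * (tN - E)) ∧
    ∀ lam ∈ Set.Icc 0 (NT * NN * ((tN - E) - (tT + E)) / (NT * (tT + E) - NN * (tN - E))),
      ∀ eT ∈ Set.Icc (-E) E, ∀ eN ∈ Set.Icc (-E) E,
        NT * (tT + eT) / (NT + lam) ≤ NN * (tN + eN) / (NN + lam) := by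
  have hTE : (0:ℝ) < tT + E := by linarith
  have hgap : tT + E < tN - E := by
    have := (one_lt_div hTE).mp h1; linarith
  have hD : 0 < NT * (tT + E) - NN * (tN - E) := by
    rw [div_lt_div_iff₀ hTE hNN] at h2; linarith
  have hNum : 0 < NT * NN * ((tN - E) - (tT + E)) := by
    exact mul_pos (mul_pos (lt_trans hNN hNT) hNN) (by linarith)
  have hLU : 0 < NT * NN * ((tN - E) - (tT + E)) / (NT * (tT + E) - NN * (tN - E)) :=
    div_pos hNum hD
  refine ⟨hLU, ?_⟩
  rintro lam ⟨hl0, hl1⟩ eT ⟨heT1, heT2⟩ eN ⟨heN1, heN2⟩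
  have hNTl : 0 < NT + lam := by linarith
  have hNNl : 0 < NN + lam := by linarith
  rw [div_le_div_iff₀ hNTl hNNl]
  have hkey : lam * (NT * (tT + E) - NN * (tN - E)) ≤ NT * NN * ((tN - E) - (tT + E)) := by
    calc lam * (NT * (tT + E) - NN * (tN - E))
        ≤ NT * NN * ((tN - E) - (tT + E)) / (NT * (tT + E) - NN * (tN - E)) *
            (NT * (tT + E) - NN * (tN - E)) := by
          exact mul_le_mul_of_nonneg_right hl1 hD.le
      _ = NT * NN * ((tN - E) - (tT + E)) := div_mul_cancel₀ _ (ne_of_gt hD)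
  have hNT0 : 0 < NT := lt_trans hNN hNT
  nlinarith [mul_le_mul_of_nonneg_left heT2 (mul_pos hNT0 hNNl).le,
    mul_le_mul_of_nonneg_left heN1 (mul_pos hNN hNTl).le]
end

section
/- Let N_T > N_N > 0, θ_T, θ_N > 0, and a, b > 0. Define x(λ) = N_T·a/(N_T+λ), y(λ) = N_N·b/(N_N+λ), and h(λ) = (θ_T·x(λ) + θ_N·y(λ))/√(x(λ)² + y(λ)²) for λ ≥ 0. If x(λ)/y(λ) > θ_T/θ_N for all λ in an interval I ⊆ [0, ∞), then h is strictly decreasing on I. -/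
theorem stmt_6 (NT NN tT tN a b : ℝ) (hNN : 0 < NN) (hNT : NN < NT)
    (htT : 0 < tT) (htN : 0 < tN) (ha : 0 < a) (hb : 0 < b)
    (x y h : ℝ → ℝ)
    (hx : ∀ lam, x lam = NT * a / (NT + lam))
    (hy : ∀ lam, y lam = NN * b / (NN + lam))
    (hh : ∀ lam, h lam = (tT * x lam + tN * y lam) / Real.sqrt (x lam ^ 2 + y lam ^ 2))
    (I : Set ℝ) (hI : I ⊆ Set.Ici 0) (hIconn : I.OrdConnected)
    (hratio : ∀ lam ∈ I, tT / tN < x lam / y lam) :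
    StrictAntiOn h I := by
  have hxpos : ∀ lam ∈ I, 0 < x lam := by
    intro lam hlam
    have h0 : (0:ℝ) ≤ lam := hI hlam
    rw [hx]
    apply div_pos (mul_pos (lt_trans hNN hNT) ha) (by linarith)
  have hypos : ∀ lam ∈ I, 0 < y lam := by
    intro lam hlam
    have h0 : (0:ℝ) ≤ lam := hI hlam
    rw [hy]
    apply div_pos (by positivity) (by linarith)
  have hkey : ∀ lam ∈ I, tT * y lam < tN * x lam := by
    intro lam hlam
    have := hratio lam hlam
    rw [div_lt_div_iff₀ htN (hypos lam hlam)] at this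
    linarith
  intro l1 h1 l2 h2 hlt
  have hl1 : (0:ℝ) ≤ l1 := hI h1
  have hl2 : (0:ℝ) ≤ l2 := hI h2
  have hx1 := hxpos l1 h1
  have hx2 := hxpos l2 h2
  have hy1 := hypos l1 h1
  have hy2 := hypos l2 h2
  have hk1 := hkey l1 h1
  have hk2 := hkey l2 h2
  -- cross ratio: x l1 * y l2 < x l2 * y l1
  have hcross : x l1 * y l2 < x l2 * y l1 := by
    rw [hx, hx, hy, hy, div_mul_div_comm, div_mul_div_comm]
    rw [div_lt_div_iff₀ (by nlinarith) (by nlinarith)]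
    nlinarith [mul_pos (mul_pos (mul_pos hNN hb) (mul_pos (lt_trans hNN hNT) ha)) (sub_pos.2 hlt), mul_pos hNN hb, mul_pos (lt_trans hNN hNT) ha]
  have hs1 : (0:ℝ) < x l1 ^ 2 + y l1 ^ 2 := by positivity
  have hs2 : (0:ℝ) < x l2 ^ 2 + y l2 ^ 2 := by positivity
  rw [hh, hh, div_lt_div_iff₀ (Real.sqrt_pos.2 hs2) (Real.sqrt_pos.2 hs1)]
  have hA : (0:ℝ) ≤ tT * x l2 + tN * y l2 := by positivity
  have hB : (0:ℝ) ≤ tT * x l1 + tN * y l1 := by positivity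
  calc (tT * x l2 + tN * y l2) * Real.sqrt (x l1 ^ 2 + y l1 ^ 2)
      = Real.sqrt ((tT * x l2 + tN * y l2) ^ 2 * (x l1 ^ 2 + y l1 ^ 2)) := by
        rw [Real.sqrt_mul (by positivity), Real.sqrt_sq hA]
    _ < Real.sqrt ((tT * x l1 + tN * y l1) ^ 2 * (x l2 ^ 2 + y l2 ^ 2)) := by
        apply Real.sqrt_lt_sqrt (by positivity)
        nlinarith [mul_pos (sub_pos.2 hcross) (mul_pos (sub_pos.2 hk1) (by positivity : (0:ℝ) < tN * y l2 + tT * x l2)),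
          mul_pos (sub_pos.2 hcross) (mul_pos (sub_pos.2 hk2) (by positivity : (0:ℝ) < tN * y l1 + tT * x l1))]
    _ = (tT * x l1 + tN * y l1) * Real.sqrt (x l2 ^ 2 + y l2 ^ 2) := by
        rw [Real.sqrt_mul (by positivity), Real.sqrt_sq hB]
end

section
/- Let N_T > N_N > 0 and θ_T, θ_N > 0, and suppose Ē satisfies 0 ≤ Ē < ((N_T − N_N)/(N_T + N_N))·min(θ_T, θ_N). Then there exists α > 0 such that for all ε_T, ε_N ∈ [−Ē, Ē], the limit ratio C(ε_T, ε_N) = N_T(θ_T + ε_T)/(N_N(θ_N + ε_N)) satisfies C(ε_T, ε_N) ≥ (θ_T/θ_N)·(2N_N + α(N_T + N_N))/(2N_T − α(N_T + N_N)) > θ_T/θ_N. Consequently, there exists a finite λ̄ ≥ 0 such that for all λ > λ̄ and all ε_T, ε_N ∈ [−Ē, Ē], A(λ; ε_T, ε_N) = C(ε_T, ε_N)·(N_N + λ)/(N_T + λ) > θ_T/θ_N. -/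
private lemma stmt_15_aux (tT tN E eT eN : ℝ) (htTE : 0 < tT - E) (htNE : 0 < tN + E)
    (h1 : -E ≤ eT) (h2 : eN ≤ E) :
    (tT - E) * (tN + eN) ≤ (tT + eT) * (tN + E) := by
  nlinarith [mul_nonneg htTE.le (sub_nonneg.mpr h2),
    mul_nonneg (show (0:ℝ) ≤ eT + E by linarith) htNE.le]

theorem stmt_15 (NT NN tT tN E : ℝ) (hNN : 0 < NN) (hNT : NN < NT)
    (htT : 0 < tT) (htN : 0 < tN)
    (hE0 : 0 ≤ E) (hE : E < (NT - NN) / (NT + NN) * min tT tN) :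
    ∃ α > 0,
      (∀ eT ∈ Set.Icc (-E) E, ∀ eN ∈ Set.Icc (-E) E,
        tT / tN * ((2 * NN + α * (NT + NN)) / (2 * NT - α * (NT + NN)))
            ≤ NT * (tT + eT) / (NN * (tN + eN)) ∧
        tT / tN < tT / tN * ((2 * NN + α * (NT + NN)) / (2 * NT - α * (NT + NN)))) ∧
      ∃ lambar ≥ (0 : ℝ), ∀ lam > lambar,
        ∀ eT ∈ Set.Icc (-E) E, ∀ eN ∈ Set.Icc (-E) E,
          tT / tN < NT * (tT + eT) / (NN * (tN + eN)) * ((NN + lam) / (NT + lam)) := by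
  have hNT0 : 0 < NT := hNN.trans hNT
  have hS : 0 < NT + NN := by linarith
  have hm0 : 0 < min tT tN := lt_min htT htN
  have hm1 : min tT tN ≤ tT := min_le_left _ _
  have hm2 : min tT tN ≤ tN := min_le_right _ _
  have hE' : E * (NT + NN) < (NT - NN) * min tT tN := by
    rw [div_mul_eq_mul_div, lt_div_iff₀ hS] at hE
    exact hE
  have hEtT : E < tT := by nlinarith
  have hEtN : E < tN := by nlinarith
  have htTE : 0 < tT - E := by linarith
  have htNE : 0 < tN + E := by linarith
  have hNNtNE : 0 < NN * (tN + E) := mul_pos hNN htNE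
  have hsub : 0 < NT - NN := by linarith
  have key : E * (NT * tN + NN * tT) < tT * tN * (NT - NN) := by
    have h3 : E * (NT + NN) * (NT * tN + NN * tT)
        < (NT - NN) * min tT tN * (NT * tN + NN * tT) :=
      mul_lt_mul_of_pos_right hE' (by positivity)
    have h1 : (NT - NN) * (NT * tN * min tT tN) ≤ (NT - NN) * (NT * tN * tT) :=
      mul_le_mul_of_nonneg_left
        (mul_le_mul_of_nonneg_left hm1 (mul_pos hNT0 htN).le) hsub.le
    have h2 : (NT - NN) * (NN * tT * min tT tN) ≤ (NT - NN) * (NN * tT * tN) :=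
      mul_le_mul_of_nonneg_left
        (mul_le_mul_of_nonneg_left hm2 (mul_pos hNN htT).le) hsub.le
    have h4 : E * (NT * tN + NN * tT) * (NT + NN)
        < tT * tN * (NT - NN) * (NT + NN) := by nlinarith [h3, h1, h2]
    exact lt_of_mul_lt_mul_right (by nlinarith [h4]) hS.le
  have hK : tT / tN < NT * (tT - E) / (NN * (tN + E)) := by
    rw [div_lt_div_iff₀ htN hNNtNE]
    nlinarith [key]
  obtain ⟨K, hKdef⟩ : ∃ K : ℝ, K = NT * (tT - E) / (NN * (tN + E)) := ⟨_, rfl⟩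
  rw [← hKdef] at hK
  have hKpos : 0 < K := hKdef ▸ div_pos (mul_pos hNT0 htTE) hNNtNE
  obtain ⟨r, hrdef⟩ : ∃ r : ℝ, r = K * tN / tT := ⟨_, rfl⟩
  have hr1 : 1 < r := by
    rw [hrdef, lt_div_iff₀ htT]
    have := (div_lt_iff₀ htN).mp hK
    linarith
  have hr0 : 0 < 1 + r := by linarith
  obtain ⟨α, hadef⟩ : ∃ a : ℝ, a = 2 * (NT * r - NN) / ((NT + NN) * (1 + r)) := ⟨_, rfl⟩
  have hα : 0 < α := by
    rw [hadef]
    apply div_pos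
    · nlinarith
    · positivity
  have hden : 2 * NT - α * (NT + NN) = 2 * (NT + NN) / (1 + r) := by
    rw [hadef]
    field_simp
    ring
  have hnum : 2 * NN + α * (NT + NN) = 2 * r * (NT + NN) / (1 + r) := by
    rw [hadef]
    field_simp
    ring
  have hdenpos : 0 < 2 * NT - α * (NT + NN) := by
    rw [hden]; positivity
  have hKr : K = r * (tT / tN) := by
    rw [hrdef]; field_simp
  have heq : tT / tN * ((2 * NN + α * (NT + NN)) / (2 * NT - α * (NT + NN))) = K := by
    rw [hnum, hden, hKr]
    have h1 : (1 + r) ≠ 0 := ne_of_gt hr0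
    have h2 : (NT + NN) ≠ 0 := ne_of_gt hS
    field_simp
  -- main monotonicity fact
  have hC : ∀ eT ∈ Set.Icc (-E) E, ∀ eN ∈ Set.Icc (-E) E,
      K ≤ NT * (tT + eT) / (NN * (tN + eN)) := by
    intro eT heT eN heN
    obtain ⟨heT1, heT2⟩ := heT
    obtain ⟨heN1, heN2⟩ := heN
    have htNeN : 0 < tN + eN := by linarith
    rw [hKdef, div_le_div_iff₀ hNNtNE (mul_pos hNN htNeN)]
    have h1 : (tT - E) * (tN + eN) ≤ (tT + eT) * (tN + E) :=
      stmt_15_aux tT tN E eT eN htTE htNE heT1 heN2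
    have h2 : NT * NN * ((tT - E) * (tN + eN)) ≤ NT * NN * ((tT + eT) * (tN + E)) :=
      mul_le_mul_of_nonneg_left h1 (mul_pos hNT0 hNN).le
    calc NT * (tT - E) * (NN * (tN + eN)) = NT * NN * ((tT - E) * (tN + eN)) := by ring
      _ ≤ NT * NN * ((tT + eT) * (tN + E)) := h2
      _ = NT * (tT + eT) * (NN * (tN + E)) := by ring
  refine ⟨α, hα, ?_, ?_⟩
  · intro eT heT eN heN
    exact ⟨heq ▸ hC eT heT eN heN, heq ▸ hK⟩
  · refine ⟨max 0 ((NT - r * NN) / (r - 1)), le_max_left _ _, ?_⟩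
    intro lam hlam eT heT eN heN
    have hlam0 : 0 < lam := lt_of_le_of_lt (le_max_left _ _) hlam
    have hr1' : 0 < r - 1 := by linarith
    have hlam' : (NT - r * NN) / (r - 1) < lam :=
      lt_of_le_of_lt (le_max_right _ _) hlam
    have hlin : NT - r * NN < lam * (r - 1) := (div_lt_iff₀ hr1').mp hlam'
    have hNTlam : 0 < NT + lam := by linarith
    have hNNlam : 0 < NN + lam := by linarith
    have hstep : NT + lam < r * (NN + lam) := by linarith [hlin]
    have hfrac : 1 < r * ((NN + lam) / (NT + lam)) := by
      rw [mul_div_assoc', lt_div_iff₀ hNTlam]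
      linarith
    have hKfrac : tT / tN < K * ((NN + lam) / (NT + lam)) := by
      rw [hKr]
      have hp : 0 < tT / tN := div_pos htT htN
      calc tT / tN = tT / tN * 1 := by ring
        _ < tT / tN * (r * ((NN + lam) / (NT + lam))) :=
            (mul_lt_mul_iff_right₀ hp).mpr hfrac
        _ = r * (tT / tN) * ((NN + lam) / (NT + lam)) := by ring
    have hmono := mul_le_mul_of_nonneg_right (hC eT heT eN heN)
      (div_nonneg hNNlam.le hNTlam.le)
    linarith
end

section
/- Let C > 1, θ_T, θ_N > 0, Ē ≥ 0, and 0 < α < 1/2. For N ≥ 1 define N_T = N, N_N = N/C, and let Λ(N) = [N_T·N_N·(Ē(1 + 1/N_T)θ_T·N_N^{α−1/2} + Ē·θ_N·N_T^{α−1/2} + θ_Nθ_T/N_T)] / [θ_Tθ_N(N_T − N_N(1 + 1/N_T)) − Ē·θ_N·N_T^{α+1/2} − Ē(1 + 1/N_T)θ_T·N_N^{α+1/2}]. Then there exist constants K > 0 and N₀ such that for all N ≥ N₀ the denominator is positive and 0 < Λ(N) ≤ K·N^{α + 1/2}; i.e., Λ(N) = O(N^{1/2 + α}). -/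
set_option maxHeartbeats 1000000

open Filter Real

theorem stmt_18 (C tT tN E α : ℝ) (hC : 1 < C) (htT : 0 < tT) (htN : 0 < tN)
    (hE : 0 ≤ E) (hα0 : 0 < α) (hα1 : α < 1 / 2)
    (NT NN num den Λ : ℝ → ℝ)
    (hNT : ∀ N, NT N = N) (hNN : ∀ N, NN N = N / C)
    (hnum : ∀ N, num N = NT N * NN N *
      (E * (1 + 1 / NT N) * tT * NN N ^ (α - 1 / 2) + E * tN * NT N ^ (α - 1 / 2)
        + tN * tT / NT N))
    (hden : ∀ N, den N = tT * tN * (NT N - NN N * (1 + 1 / NT N))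
      - E * tN * NT N ^ (α + 1 / 2) - E * (1 + 1 / NT N) * tT * NN N ^ (α + 1 / 2))
    (hΛ : ∀ N, Λ N = num N / den N) :
    ∃ K > (0 : ℝ), ∃ N₀ : ℝ, 1 ≤ N₀ ∧ ∀ N ≥ N₀,
      0 < den N ∧ 0 < Λ N ∧ Λ N ≤ K * N ^ (α + 1 / 2) := by
  have hC0 : (0:ℝ) < C := by linarith
  set p := α + 1/2 with hp
  have hp0 : 0 < p := by rw [hp]; linarith
  have hp1 : p < 1 := by rw [hp]; linarith
  have h1C : 1/C < 1 := by rw [div_lt_one hC0]; exact hC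
  have hc : 0 < tT * tN * (1 - 1/C) := by
    have h2 := mul_pos htT htN
    nlinarith

  obtain ⟨c, hcdef⟩ : ∃ x : ℝ, x = tT * tN * (1 - 1/C) := ⟨_, rfl⟩
  rw [← hcdef] at hc
  have hCp : 0 < C ^ p := Real.rpow_pos_of_pos hC0 p
  obtain ⟨B, hB⟩ : ∃ x : ℝ, x = E * tN + 2 * E * tT / C ^ p := ⟨_, rfl⟩
  have hB0 : 0 ≤ B := by rw [hB]; positivity
  have hCq : 0 < C ^ (1/2 - α) := Real.rpow_pos_of_pos hC0 _
  obtain ⟨A, hA⟩ : ∃ x : ℝ, x = (2 * E * tT * C ^ (1/2 - α) + E * tN + tN * tT) / C := ⟨_, rfl⟩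
  have hA0 : 0 < A := by
    rw [hA]
    apply div_pos _ hC0
    nlinarith [mul_pos htN htT, mul_nonneg (mul_nonneg (mul_nonneg (by norm_num : (0:ℝ) ≤ 2) hE) htT.le) hCq.le, mul_nonneg hE htN.le]
  obtain ⟨ε, hε⟩ : ∃ x : ℝ, x = c / (2 * (B + 1)) := ⟨_, rfl⟩
  have hε0 : 0 < ε := by rw [hε]; positivity
  have hev1 : ∀ᶠ N : ℝ in atTop, N ^ (p - 1) < ε := by
    have h := tendsto_rpow_neg_atTop (show (0:ℝ) < 1 - p by linarith)
    have h2 : (fun x : ℝ => x ^ (-(1 - p))) = fun x : ℝ => x ^ (p - 1) := by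
      funext x; ring_nf
    rw [h2] at h
    exact h.eventually_lt_const hε0
  have hev2 : ∀ᶠ N : ℝ in atTop, (4/c) * (tT * tN / C) ≤ N := eventually_ge_atTop _
  have hev3 : ∀ᶠ N : ℝ in atTop, (1:ℝ) ≤ N := eventually_ge_atTop 1
  obtain ⟨N₀, hN₀⟩ := eventually_atTop.mp (hev1.and (hev2.and hev3))
  refine ⟨4 * A / c, by positivity, max N₀ 1, le_max_right _ _, ?_⟩
  intro N hN
  obtain ⟨hNp, hNc, hN1⟩ := hN₀ N (le_trans (le_max_left _ _) hN)
  have hN0 : (0:ℝ) < N := by linarith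
  have hNover : 1 + 1/N ≤ 2 := by
    have : 1/N ≤ 1 := by rw [div_le_one hN0]; exact hN1
    linarith
  have hNover0 : (0:ℝ) ≤ 1 + 1/N := by positivity
  have hNppos : (0:ℝ) < N ^ p := Real.rpow_pos_of_pos hN0 _
  have hNqpos : (0:ℝ) < N ^ (α - 1/2) := Real.rpow_pos_of_pos hN0 _
  -- N^p ≤ ε * N
  have hNpN : N ^ p ≤ ε * N := by
    have h1 : N ^ p = N ^ (p - 1) * N := by
      rw [← Real.rpow_add_one hN0.ne' (p - 1)]; ring_nf
    rw [h1]
    exact mul_le_mul_of_nonneg_right hNp.le hN0.le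
  have hBN : B * N ^ p ≤ (c/2) * N := by
    have h1 : B * N ^ p ≤ B * (ε * N) := mul_le_mul_of_nonneg_left hNpN hB0
    have hkey : B * ε ≤ c/2 := by
      rw [hε, mul_div_assoc', div_le_div_iff₀ (by positivity) (by norm_num)]
      nlinarith
    have h2 : B * (ε * N) ≤ (c/2) * N := by
      calc B * (ε * N) = (B * ε) * N := by ring
        _ ≤ (c/2) * N := mul_le_mul_of_nonneg_right hkey hN0.le
    exact h1.trans h2
  have htc : tT * tN / C ≤ (c/4) * N := by
    have h := mul_le_mul_of_nonneg_left hNc (show (0:ℝ) ≤ c/4 by positivity)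
    calc tT * tN / C = (c/4) * ((4/c) * (tT*tN/C)) := by
          field_simp
      _ ≤ (c/4) * N := h
  -- rewrite (N/C)^p
  have hdivp : (N/C) ^ p = N ^ p / C ^ p := Real.div_rpow hN0.le hC0.le p
  have hdivq : (N/C) ^ (α - 1/2) = N ^ (α - 1/2) * C ^ (1/2 - α) := by
    rw [Real.div_rpow hN0.le hC0.le, show (1:ℝ)/2 - α = -(α - 1/2) by ring,
      Real.rpow_neg hC0.le, div_eq_mul_inv]
  -- den lower bound
  have e1 : N - (N/C) * (1 + 1/N) = (1 - 1/C) * N - 1/C := by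
    field_simp
    ring
  have hdenval : den N = c * N - tT * tN / C - E * tN * N ^ p
      - E * (1 + 1/N) * tT * (N ^ p / C ^ p) := by
    rw [hden, hNT, hNN, hdivp, e1, hcdef]
    ring
  have hdenlb : (c/4) * N ≤ den N := by
    rw [hdenval]
    have h1 : E * (1 + 1/N) * tT * (N ^ p / C ^ p) ≤ 2 * E * tT / C ^ p * N ^ p := by
      have hx : (0:ℝ) ≤ N ^ p / C ^ p := by positivity
      have hy : E * (1 + 1/N) * tT ≤ 2 * E * tT := by
        calc E * (1 + 1/N) * tT = (E * tT) * (1 + 1/N) := by ring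
          _ ≤ (E * tT) * 2 := mul_le_mul_of_nonneg_left hNover (mul_nonneg hE htT.le)
          _ = 2 * E * tT := by ring
      calc E * (1 + 1/N) * tT * (N ^ p / C ^ p)
          ≤ 2 * E * tT * (N ^ p / C ^ p) := mul_le_mul_of_nonneg_right hy hx
        _ = 2 * E * tT / C ^ p * N ^ p := by ring
    have h2 : E * tN * N ^ p + (2 * E * tT / C ^ p) * N ^ p = B * N ^ p := by
      rw [hB]; ring
    linarith
  have hdenpos : 0 < den N := lt_of_lt_of_le (by positivity) hdenlb
  -- num bound
  have hq2 : N ^ (α - 1/2) * N * N = N ^ (p + 1) := by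
    rw [show p + 1 = (α - 1/2) + 1 + 1 by rw [hp]; ring,
      Real.rpow_add_one hN0.ne', Real.rpow_add_one hN0.ne']
  have hNp1pos : (0:ℝ) < N ^ (p+1) := Real.rpow_pos_of_pos hN0 _
  have hNlep : N ≤ N ^ (p + 1) := by
    calc N = N ^ (1:ℝ) := (Real.rpow_one N).symm
      _ ≤ N ^ (p + 1) := Real.rpow_le_rpow_of_exponent_le hN1 (by linarith)
  have hnumub : num N ≤ A * N ^ (p + 1) := by
    rw [hnum, hNT, hNN, hdivq]
    have ht1 : E * (1 + 1/N) * tT * (N ^ (α-1/2) * C ^ (1/2-α))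
        ≤ 2*E*tT*C^(1/2-α) * N ^ (α-1/2) := by
      have hz : (0:ℝ) ≤ N ^ (α-1/2) * C ^ (1/2-α) := mul_nonneg hNqpos.le hCq.le
      calc E * (1 + 1/N) * tT * (N ^ (α-1/2) * C ^ (1/2-α))
          = (E*tT)*(1+1/N) * (N ^ (α-1/2) * C ^ (1/2-α)) := by ring
        _ ≤ (E*tT)*2 * (N ^ (α-1/2) * C ^ (1/2-α)) :=
            mul_le_mul_of_nonneg_right
              (mul_le_mul_of_nonneg_left hNover (mul_nonneg hE htT.le)) hz
        _ = 2*E*tT*C^(1/2-α) * N ^ (α-1/2) := by ring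
    have hS : E * (1 + 1/N) * tT * (N ^ (α-1/2) * C ^ (1/2-α)) + E * tN * N ^ (α-1/2)
        + tN * tT / N ≤ (2*E*tT*C^(1/2-α) + E*tN) * N ^ (α-1/2) + tN*tT/N := by
      linarith
    calc N * (N/C) * (E * (1 + 1/N) * tT * (N ^ (α-1/2) * C ^ (1/2-α)) + E * tN * N ^ (α-1/2) + tN*tT/N)
        ≤ N * (N/C) * ((2*E*tT*C^(1/2-α) + E*tN) * N ^ (α-1/2) + tN*tT/N) := by
          apply mul_le_mul_of_nonneg_left hS (by positivity)
      _ = (2*E*tT*C^(1/2-α) + E*tN)/C * (N ^ (α-1/2) * N * N) + (tN*tT/C) * N := by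
          have hxx : N * (1/N) = 1 := by field_simp
          field_simp
      _ ≤ (2*E*tT*C^(1/2-α) + E*tN)/C * N ^ (p+1) + (tN*tT/C) * N ^ (p+1) := by
          have h1 : (0:ℝ) ≤ (2*E*tT*C^(1/2-α) + E*tN)/C := by positivity
          have h2 : (0:ℝ) ≤ tN*tT/C := by positivity
          rw [hq2]
          have h3 := mul_le_mul_of_nonneg_left hNlep h2
          linarith
      _ = A * N ^ (p+1) := by rw [hA]; ring
  have hnumpos : 0 < num N := by
    rw [hnum, hNT, hNN]
    have h1 : 0 < tN * tT / N := by positivity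
    have h2 : (0:ℝ) ≤ E * (1 + 1/N) * tT * (N/C) ^ (α - 1/2) := by
      have := Real.rpow_nonneg (le_of_lt (div_pos hN0 hC0)) (α - 1/2)
      positivity
    have h3 : (0:ℝ) ≤ E * tN * N ^ (α - 1/2) := by positivity
    have h4 : (0:ℝ) < N * (N/C) := by positivity
    have h5 : 0 < E * (1 + 1/N) * tT * (N/C) ^ (α - 1/2) + E * tN * N ^ (α - 1/2)
        + tN * tT / N := by linarith
    exact mul_pos h4 h5
  refine ⟨hdenpos, ?_, ?_⟩
  · rw [hΛ]; exact div_pos hnumpos hdenpos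
  · rw [hΛ]
    have h1 : num N / den N ≤ (A * N ^ (p+1)) / ((c/4) * N) :=
      div_le_div₀ (by positivity) hnumub (by positivity) hdenlb
    have h2 : (A * N ^ (p+1)) / ((c/4) * N) = 4 * A / c * N ^ p := by
      rw [show p + 1 = p + 1 from rfl, Real.rpow_add_one hN0.ne' p]
      field_simp
    rw [h2] at h1
    exact h1
end

section
/- Let N_T > N_N > 0, θ_T > θ_N > 0, and Ē with (θ_T − θ_N)/2 < Ē < ((N_T − N_N)/(N_T + N_N))·θ_N. Define λ_L = N_T N_N(θ_N − θ_T + 2Ē)/(N_T(θ_T − Ē) − N_N(θ_N + Ē)). If N_T/N_N is held equal to a constant ratio C > 1 while N_T grows, then λ_L = Θ(N_T); i.e., there exist constants 0 < c₁ ≤ c₂ and N₀ such that c₁·N_T ≤ λ_L ≤ c₂·N_T for all N_T ≥ N₀. -/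
theorem stmt_19 (C tT tN E : ℝ) (hC : 1 < C) (htN : 0 < tN) (htT : tN < tT)
    (hE1 : (tT - tN) / 2 < E) (hE2 : E < (C - 1) / (C + 1) * tN)
    (lamL : ℝ → ℝ)
    (hlamL : ∀ NT, lamL NT = NT * (NT / C) * (tN - tT + 2 * E) /
      (NT * (tT - E) - (NT / C) * (tN + E))) :
    ∃ c₁ c₂ : ℝ, 0 < c₁ ∧ c₁ ≤ c₂ ∧ ∃ N₀ : ℝ, 0 < N₀ ∧
      ∀ NT ≥ N₀, c₁ * NT ≤ lamL NT ∧ lamL NT ≤ c₂ * NT := by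
  have hC0 : (0:ℝ) < C := by linarith
  have hC1 : (0:ℝ) < C + 1 := by linarith
  have hA : 0 < tN - tT + 2 * E := by linarith
  -- B = (tT - E) - (tN + E)/C > 0, i.e. C*(tT-E) - (tN+E) > 0
  have hE2' : E * (C + 1) < (C - 1) * tN := by
    rw [div_mul_eq_mul_div, lt_div_iff₀ hC1] at hE2
    linarith
  have hB : 0 < C * (tT - E) - (tN + E) := by nlinarith
  set k := (tN - tT + 2 * E) / (C * (tT - E) - (tN + E))
  have hk : 0 < k := div_pos hA hB
  refine ⟨k, k, hk, le_refl _, 1, one_pos, ?_⟩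
  intro NT hNT
  have hNT0 : (0:ℝ) < NT := by linarith
  have key : lamL NT = k * NT := by
    rw [hlamL NT]
    have hden : NT * (tT - E) - (NT / C) * (tN + E)
        = NT * (C * (tT - E) - (tN + E)) / C := by
      field_simp
    rw [hden]
    have hd1 : NT * (C * (tT - E) - (tN + E)) / C ≠ 0 :=
      (div_pos (mul_pos hNT0 hB) hC0).ne'
    show _ = (tN - tT + 2 * E) / (C * (tT - E) - (tN + E)) * NT
    rw [div_mul_eq_mul_div, div_eq_div_iff hd1 hB.ne']
    field_simp
  constructor <;> rw [key]
end
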